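/- arXiv:1401.6478 — 2 statements merged into one kernel-verified Lean document; each statement's English description precedes it below -/
import Mathlib

section
/- Consider a path P = (1,...,n) with energy dynamics E_{i+1} = E_i + r_i - e_{i,i+1} for recharge amounts r_i ≥ 0, strictly positive travel times τ_{i,i+1} > 0, strictly positive energy consumption e_{i,i+1} > 0, charging rate factor g > 0, energy feasibility 0 ≤ E_i for all i, and objective J(r) = ∑_{i=1}^{n-1} (τ_{i,i+1} + r_i·g). If a recharge vector r* minimizes J over all feasible recharge vectors with ∑_i r_i* > 0 (i.e., the vehicle recharges at least once), then the terminal energy satisfies E_n* = 0. -/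
open Finset in
/-- Lemma 2 of the paper: along a fixed path `P = (1, …, n)` with energy dynamics
`E_{i+1} = E_i + r_i - e_{i,i+1}`, positive travel times and energy consumptions,
if an optimal recharge policy recharges a strictly positive total amount, then
the residual energy at the destination is zero: `E_n* = 0`. -/
theorem optimal_recharge_zero_terminal_energy (n : ℕ) (hn : 2 ≤ n)
    (τ e : ℕ → ℝ) (g : ℝ) (hg : 0 < g)
    (hτ : ∀ i ∈ Icc 1 (n - 1), 0 < τ i)
    (he : ∀ i ∈ Icc 1 (n - 1), 0 < e i)
    (E₁ : ℝ)
    (rstar Estar : ℕ → ℝ)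
    (hE1 : Estar 1 = E₁)
    (hdyn : ∀ i ∈ Icc 1 (n - 1), Estar (i + 1) = Estar i + rstar i - e i)
    (hrpos : ∀ i ∈ Icc 1 (n - 1), 0 ≤ rstar i)
    (hEpos : ∀ i ∈ Icc 1 n, 0 ≤ Estar i)
    (hsum : 0 < ∑ i ∈ Icc 1 (n - 1), rstar i)
    -- optimality of r* among all feasible recharge vectors
    (hopt : ∀ r E : ℕ → ℝ, E 1 = E₁ →
      (∀ i ∈ Icc 1 (n - 1), E (i + 1) = E i + r i - e i) →
      (∀ i ∈ Icc 1 (n - 1), 0 ≤ r i) →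
      (∀ i ∈ Icc 1 n, 0 ≤ E i) →
      ∑ i ∈ Icc 1 (n - 1), (τ i + rstar i * g) ≤ ∑ i ∈ Icc 1 (n - 1), (τ i + r i * g)) :
    Estar n = 0 := by
  by_contra hne
  have hnI : n ∈ Icc 1 n := by simp; omega
  have hEn : 0 < Estar n := lt_of_le_of_ne (hEpos n hnI) (Ne.symm hne)
  -- the set of nodes with positive recharge is nonempty
  set S : Finset ℕ := (Icc 1 (n - 1)).filter (fun i => 0 < rstar i) with hS
  have hSne : S.Nonempty := by
    by_contra h
    rw [Finset.not_nonempty_iff_eq_empty, Finset.filter_eq_empty_iff] at h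
    have : ∑ i ∈ Icc 1 (n - 1), rstar i ≤ 0 :=
      Finset.sum_nonpos (fun i hi => le_of_not_gt (h hi))
    linarith
  set k := S.max' hSne with hk
  have hkS : k ∈ S := S.max'_mem hSne
  have hkI : k ∈ Icc 1 (n - 1) := Finset.mem_of_mem_filter k hkS
  have hrk : 0 < rstar k := (Finset.mem_filter.mp hkS).2
  obtain ⟨hk1, hk2⟩ := Finset.mem_Icc.mp hkI
  have hmax : ∀ j ∈ Icc 1 (n - 1), k < j → rstar j = 0 := by
    intro j hj hkj
    by_contra h
    have hjpos : 0 < rstar j := lt_of_le_of_ne (hrpos j hj) (Ne.symm h)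
    have : j ∈ S := Finset.mem_filter.mpr ⟨hj, hjpos⟩
    exact absurd (S.le_max' j this) (not_le.mpr hkj)
  -- after k, energy is nonincreasing
  have step : ∀ j, k + 1 ≤ j → j + 1 ≤ n → Estar (j + 1) ≤ Estar j := by
    intro j hj hjn
    have hjI : j ∈ Icc 1 (n - 1) := by simp; omega
    rw [hdyn j hjI, hmax j hjI (by omega)]
    have := he j hjI
    linarith
  have mono : ∀ d m, k + 1 ≤ m → m + d ≤ n → Estar (m + d) ≤ Estar m := by
    intro d
    induction d with
    | zero => intro m _ _; simp
    | succ d ih =>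
        intro m hm hmd
        have h1 : Estar ((m + 1) + d) ≤ Estar (m + 1) := ih (m + 1) (by omega) (by omega)
        have h2 : Estar (m + 1) ≤ Estar m := step m hm (by omega)
        calc Estar (m + (d + 1)) = Estar ((m + 1) + d) := by ring_nf
        _ ≤ Estar (m + 1) := h1
        _ ≤ Estar m := h2
  have mono' : ∀ m, k + 1 ≤ m → m ≤ n → Estar n ≤ Estar m := by
    intro m hm hmn
    have := mono (n - m) m hm (by omega)
    rwa [show m + (n - m) = n by omega] at this
  -- modified policy
  set δ : ℝ := min (rstar k) (Estar n) with hδ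
  have hδpos : 0 < δ := lt_min hrk hEn
  have hδr : δ ≤ rstar k := min_le_left _ _
  have hδE : δ ≤ Estar n := min_le_right _ _
  set r : ℕ → ℝ := fun i => if i = k then rstar k - δ else rstar i with hr
  set E : ℕ → ℝ := fun i => if k < i then Estar i - δ else Estar i with hEdef
  have hE1' : E 1 = E₁ := by simp [hEdef, show ¬ (k < 1) by omega, hE1]
  have hdyn' : ∀ i ∈ Icc 1 (n - 1), E (i + 1) = E i + r i - e i := by
    intro i hi
    rcases lt_trichotomy i k with h | h | h
    · simp only [hEdef, hr, show ¬ (k < i + 1) by omega, show ¬ (k < i) by omega,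
        show i ≠ k by omega, if_false, if_neg]
      simpa using hdyn i hi
    · simp only [hEdef, hr, if_pos (show k < i + 1 by omega),
        if_neg (show ¬ (k < i) by omega), if_pos h]
      have hd := hdyn i hi
      rw [← h]
      linarith
    · simp only [hEdef, hr, show k < i + 1 by omega, show k < i from h,
        show i ≠ k by omega, if_true, if_false]
      have := hdyn i hi
      linarith
  have hrpos' : ∀ i ∈ Icc 1 (n - 1), 0 ≤ r i := by
    intro i hi
    by_cases h : i = k
    · simp [hr, h]; linarith
    · simp [hr, h]; exact hrpos i hi
  have hEpos' : ∀ i ∈ Icc 1 n, 0 ≤ E i := by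
    intro i hi
    simp only [Finset.mem_Icc] at hi
    by_cases h : k < i
    · simp only [hEdef, if_pos h]
      have := mono' i (by omega) hi.2
      linarith
    · simp only [hEdef, if_neg h]
      exact hEpos i (by simp; omega)
  have hle := hopt r E hE1' hdyn' hrpos' hEpos'
  have hsum' : ∑ i ∈ Icc 1 (n - 1), (τ i + r i * g)
      = (∑ i ∈ Icc 1 (n - 1), (τ i + rstar i * g)) - δ * g := by
    have : ∀ i ∈ Icc 1 (n - 1),
        τ i + r i * g = (τ i + rstar i * g) - (if i = k then δ * g else 0) := by
      intro i _
      by_cases h : i = k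
      · simp [hr, h]; ring
      · simp [hr, h]
    rw [Finset.sum_congr rfl this, Finset.sum_sub_distrib,
      Finset.sum_ite_eq' (Icc 1 (n - 1)) k (fun _ => δ * g), if_pos hkI]
  rw [hsum'] at hle
  nlinarith [mul_pos hδpos hg]
end

section
/- Consider a path P = (1,...,n) with energy dynamics E_{i+1} = E_i + r_i - e_{i,i+1}, r_i ≥ 0, e_{i,i+1} > 0, and E_i ≥ 0 for all i. If E_n > 0 and ∑_{i=1}^{n-1} r_i > 0, then there exists an index j < n and Δ > 0 such that the perturbed recharge vector r' with r'_{j} = r_j - Δ and r'_i = r_i otherwise is still feasible (all energies nonnegative) and has strictly smaller total recharge ∑_i r'_i < ∑_i r_i. -/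
open Finset in
/-- Perturbation step in the proof of Lemma 2: if the terminal energy is
positive and some recharging occurs along the path, then some recharge `r_j`
can be decreased by `Δ > 0` while keeping all residual energies nonnegative,
strictly decreasing the total recharge. -/
theorem recharge_perturbation (n : ℕ) (hn : 2 ≤ n)
    (e : ℕ → ℝ) (he : ∀ i ∈ Icc 1 (n - 1), 0 < e i)
    (r E : ℕ → ℝ)
    (hdyn : ∀ i ∈ Icc 1 (n - 1), E (i + 1) = E i + r i - e i)
    (hr : ∀ i ∈ Icc 1 (n - 1), 0 ≤ r i)
    (hE : ∀ i ∈ Icc 1 n, 0 ≤ E i)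
    (hEn : 0 < E n)
    (hsum : 0 < ∑ i ∈ Icc 1 (n - 1), r i) :
    ∃ j ∈ Icc 1 (n - 1), ∃ Δ : ℝ, 0 < Δ ∧
      ∃ E' : ℕ → ℝ, E' 1 = E 1 ∧
        (∀ i ∈ Icc 1 (n - 1),
          E' (i + 1) = E' i + (if i = j then r i - Δ else r i) - e i) ∧
        (∀ i ∈ Icc 1 (n - 1), 0 ≤ if i = j then r i - Δ else r i) ∧
        (∀ i ∈ Icc 1 n, 0 ≤ E' i) ∧
        ∑ i ∈ Icc 1 (n - 1), (if i = j then r i - Δ else r i)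
          < ∑ i ∈ Icc 1 (n - 1), r i := by
  classical
  -- S: indices with positive recharge
  set S : Finset ℕ := (Icc 1 (n - 1)).filter (fun i => 0 < r i) with hS
  have hSne : S.Nonempty := by
    by_contra h
    rw [Finset.not_nonempty_iff_eq_empty] at h
    have : ∑ i ∈ Icc 1 (n - 1), r i = 0 := by
      apply Finset.sum_eq_zero
      intro i hi
      by_contra hri
      have : i ∈ S := by
        rw [hS, Finset.mem_filter]
        exact ⟨hi, lt_of_le_of_ne (hr i hi) (Ne.symm hri)⟩
      simp [h] at this
    linarith
  set j := S.max' hSne with hj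
  have hjS : j ∈ S := S.max'_mem hSne
  have hjIcc : j ∈ Icc 1 (n - 1) := (Finset.mem_filter.mp hjS).1
  have hrj : 0 < r j := (Finset.mem_filter.mp hjS).2
  have hj1 : 1 ≤ j := (Finset.mem_Icc.mp hjIcc).1
  have hjn : j ≤ n - 1 := (Finset.mem_Icc.mp hjIcc).2
  -- r vanishes after j
  have hr0 : ∀ m ∈ Icc 1 (n - 1), j < m → r m = 0 := by
    intro m hm hjm
    by_contra hrm
    have hpos : 0 < r m := lt_of_le_of_ne (hr m hm) (Ne.symm hrm)
    have : m ∈ S := Finset.mem_filter.mpr ⟨hm, hpos⟩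
    exact absurd (S.le_max' m this) (not_le.mpr hjm)
  -- energy after j is at least E n
  have hdec : ∀ k m : ℕ, j + 1 ≤ m → m + k = n → E n ≤ E m := by
    intro k
    induction k with
    | zero => intro m _ hm; simp at hm; rw [hm]
    | succ k ih =>
      intro m hm hmk
      have hmIcc : m ∈ Icc 1 (n - 1) := by
        rw [Finset.mem_Icc]
        omega
      have h1 : E n ≤ E (m + 1) := ih (m + 1) (by omega) (by omega)
      have h2 : E (m + 1) = E m + r m - e m := hdyn m hmIcc
      have h3 : r m = 0 := hr0 m hmIcc (by omega)
      have h4 : 0 < e m := he m hmIcc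
      linarith
  have hEge : ∀ m : ℕ, j + 1 ≤ m → m ≤ n → E n ≤ E m := by
    intro m h1 h2
    exact hdec (n - m) m h1 (by omega)
  -- the perturbation
  set Δ := min (r j) (E n) with hΔ
  have hΔpos : 0 < Δ := lt_min hrj hEn
  refine ⟨j, hjIcc, Δ, hΔpos, fun i => if i ≤ j then E i else E i - Δ, ?_, ?_, ?_, ?_, ?_⟩
  · simp [hj1]
  · intro i hi
    rcases lt_trichotomy i j with h | h | h
    · have h1 : i ≤ j := le_of_lt h
      have h2 : i + 1 ≤ j := h
      have h3 : i ≠ j := ne_of_lt h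
      simp only [if_pos h1, if_pos h2, if_neg h3]
      exact hdyn i hi
    · dsimp only
      rw [if_pos (le_of_eq h), if_neg (show ¬ i + 1 ≤ j by omega), if_pos h]
      have := hdyn i hi
      linarith
    · have h1 : ¬ i ≤ j := not_le.mpr h
      have h2 : ¬ i + 1 ≤ j := by omega
      have h3 : i ≠ j := ne_of_gt h
      simp only [if_neg h1, if_neg h2, if_neg h3]
      have := hdyn i hi
      linarith
  · intro i hi
    by_cases h : i = j
    · rw [if_pos h, h]
      have : Δ ≤ r j := min_le_left _ _
      linarith
    · simp only [if_neg h]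
      exact hr i hi
  · intro i hi
    by_cases h : i ≤ j
    · simp only [if_pos h]
      exact hE i hi
    · simp only [if_neg h]
      have h1 : E n ≤ E i := hEge i (by omega) (Finset.mem_Icc.mp hi).2
      have h2 : Δ ≤ E n := min_le_right _ _
      linarith
  · apply Finset.sum_lt_sum
    · intro i hi
      by_cases h : i = j
      · rw [if_pos h, h]; linarith
      · rw [if_neg h]
    · refine ⟨j, hjIcc, ?_⟩
      rw [if_pos rfl]
      linarith
end
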